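/- The images of the p³ monomials η₊^n η₋^m δ^k with 0 ≤ n, m, k ≤ p−1 form a ℂ-vector-space basis of A; in particular A is finite dimensional with dim_ℂ A = p³. -/

import Mathlib

open scoped TensorProduct

noncomputable section

/-- `q = exp(2πi/p)`, a primitive `p`-th root of unity. -/
def q (p : ℕ) : ℂ := Complex.exp (2 * Real.pi * Complex.I / p)

/-- `q^{1/2} = exp(iπ/p)`. -/
def qh (p : ℕ) : ℂ := Complex.exp (Real.pi * Complex.I / p)

/-- The balanced q-number `[k] = (q^k - q^{-k})/(q - q^{-1})`. -/
def qnum (p k : ℕ) : ℂ := (q p ^ k - (q p)⁻¹ ^ k) / (q p - (q p)⁻¹)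

/-- The balanced q-factorial `[k]! = [1][2]⋯[k]`, with `[0]! = 1`. -/
def qfact (p k : ℕ) : ℂ := ∏ j ∈ Finset.range k, qnum p (j + 1)

/-- Generators `η₊, η₋, δ` of the coordinate algebra of `E(1,1|p)`. -/
inductive Gen : Type
  | ep : Gen
  | em : Gen
  | d : Gen

open FreeAlgebra in
/-- The defining relations of `A(E(1,1|p))`: the two-sided ideal generated by
`η₋η₊ − q²η₊η₋`, `η₊δ − q²δη₊`, `η₋δ − q²δη₋`, `δ^p − 1`, `η₊^p`, `η₋^p`. -/
inductive ERel (p : ℕ) : FreeAlgebra ℂ Gen → FreeAlgebra ℂ Gen → Prop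
  | commEta : ERel p (ι ℂ Gen.em * ι ℂ Gen.ep) ((q p ^ 2) • (ι ℂ Gen.ep * ι ℂ Gen.em))
  | commEpD : ERel p (ι ℂ Gen.ep * ι ℂ Gen.d) ((q p ^ 2) • (ι ℂ Gen.d * ι ℂ Gen.ep))
  | commEmD : ERel p (ι ℂ Gen.em * ι ℂ Gen.d) ((q p ^ 2) • (ι ℂ Gen.d * ι ℂ Gen.em))
  | deltaPow : ERel p (ι ℂ Gen.d ^ p) 1
  | epPow : ERel p (ι ℂ Gen.ep ^ p) 0
  | emPow : ERel p (ι ℂ Gen.em ^ p) 0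

/-- The coordinate algebra `A = A(E(1,1|p))` of the reduced quantum Poincaré group. -/
abbrev A (p : ℕ) : Type := RingQuot (ERel p)

/-- `η₊ ∈ A`. -/
def ηp (p : ℕ) : A p := RingQuot.mkAlgHom ℂ (ERel p) (FreeAlgebra.ι ℂ Gen.ep)

/-- `η₋ ∈ A`. -/
def ηm (p : ℕ) : A p := RingQuot.mkAlgHom ℂ (ERel p) (FreeAlgebra.ι ℂ Gen.em)

/-- `δ ∈ A`. -/
def dl (p : ℕ) : A p := RingQuot.mkAlgHom ℂ (ERel p) (FreeAlgebra.ι ℂ Gen.d)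

open Fin.NatCast Fin.CommRing

lemma q_ne_zero (p : ℕ) : q p ≠ 0 := Complex.exp_ne_zero _

lemma q_pow_p (p : ℕ) (hp : p ≠ 0) : q p ^ p = 1 := by
  have hpc : (p : ℂ) ≠ 0 := Nat.cast_ne_zero.mpr hp
  rw [q, ← Complex.exp_nat_mul]
  rw [show (p : ℂ) * (2 * Real.pi * Complex.I / p) = 2 * Real.pi * Complex.I by
    field_simp]
  exact Complex.exp_two_pi_mul_I

lemma q_pow_mod (p : ℕ) (hp : p ≠ 0) (a : ℕ) : q p ^ a = q p ^ (a % p) := by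
  conv_lhs => rw [← Nat.div_add_mod a p]
  rw [pow_add, pow_mul, q_pow_p p hp, one_pow, one_mul]

lemma q_pow_congr (p : ℕ) (hp : p ≠ 0) {a b : ℕ} (h : a % p = b % p) :
    q p ^ a = q p ^ b := by rw [q_pow_mod p hp a, q_pow_mod p hp b, h]

lemma fin_coe_sub_one {p : ℕ} [NeZero p] (hp : 1 < p) (a : Fin p) :
    ((a - 1 : Fin p) : ℕ) = if a = 0 then p - 1 else a.val - 1 := by
  have h1v : ((1 : Fin p) : ℕ) = 1 := by simp [Fin.val_one' p, Nat.mod_eq_of_lt hp]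
  rw [Fin.sub_def]
  simp only [h1v]
  rcases eq_or_ne a 0 with rfl | ha
  · simp [Nat.mod_eq_of_lt (by omega : p - 1 < p)]
  · have hav : a.val ≠ 0 := fun h => ha (Fin.ext (by simp [h]))
    have hlt : a.val < p := a.isLt
    rw [if_neg ha]
    have h2 : p - 1 + a.val = p + (a.val - 1) := by omega
    rw [h2, Nat.add_mod_left, Nat.mod_eq_of_lt (by omega)]

abbrev Vr (p : ℕ) : Type := Fin p × Fin p × Fin p → ℂ

def Dd (p : ℕ) [NeZero p] : Vr p →ₗ[ℂ] Vr p where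
  toFun f := fun x => f (x.1, x.2.1, x.2.2 - 1)
  map_add' f g := rfl
  map_smul' c f := rfl

def Epl (p : ℕ) [NeZero p] : Vr p →ₗ[ℂ] Vr p where
  toFun f := fun x =>
    if x.1 = 0 then 0 else q p ^ (2 * (x.2.2 : ℕ)) * f (x.1 - 1, x.2.1, x.2.2)
  map_add' f g := by
    funext x
    by_cases h : x.1 = 0 <;> simp [h, Pi.add_apply] <;> ring
  map_smul' c f := by
    funext x
    by_cases h : x.1 = 0 <;> simp [h, Pi.smul_apply, smul_eq_mul] <;> ring

def Eml (p : ℕ) [NeZero p] : Vr p →ₗ[ℂ] Vr p where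
  toFun f := fun x =>
    if x.2.1 = 0 then 0
    else q p ^ (2 * (x.2.2 : ℕ) + 2 * (x.1 : ℕ)) * f (x.1, x.2.1 - 1, x.2.2)
  map_add' f g := by
    funext x
    by_cases h : x.2.1 = 0 <;> simp [h, Pi.add_apply] <;> ring
  map_smul' c f := by
    funext x
    by_cases h : x.2.1 = 0 <;> simp [h, Pi.smul_apply, smul_eq_mul] <;> ring

lemma rel1 (p : ℕ) [NeZero p] (hp : 1 < p) :
    Eml p * Epl p = (q p ^ 2) • (Epl p * Eml p) := by
  apply LinearMap.ext; intro f
  funext x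
  obtain ⟨n, m, k⟩ := x
  simp only [Module.End.mul_apply, LinearMap.smul_apply, Pi.smul_apply, smul_eq_mul,
    Epl, Eml, LinearMap.coe_mk, AddHom.coe_mk]
  by_cases hn : n = 0
  · simp [hn]
  by_cases hm : m = 0
  · simp [hm]
  simp only [if_neg hn, if_neg hm]
  have hnv : ((n - 1 : Fin p) : ℕ) = n.val - 1 := by
    rw [fin_coe_sub_one hp n, if_neg hn]
  have hn1 : 1 ≤ n.val := Nat.one_le_iff_ne_zero.mpr (fun h => hn (Fin.ext (by simp [h])))
  rw [hnv, ← mul_assoc, ← mul_assoc, ← mul_assoc, ← pow_add, ← pow_add, ← pow_add]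
  congr 2
  omega

lemma q_shift (p : ℕ) [NeZero p] (hp : 1 < p) (k : Fin p) :
    q p ^ 2 * q p ^ (2 * ((k - 1 : Fin p) : ℕ)) = q p ^ (2 * (k : ℕ)) := by
  rw [← pow_add]
  apply q_pow_congr p (NeZero.ne p)
  rw [fin_coe_sub_one hp k]
  by_cases hk : k = 0
  · rw [if_pos hk, hk]
    simp only [Fin.val_zero, Nat.mul_zero, Nat.zero_mod]
    rw [show 2 + 2 * (p - 1) = 2 * p by omega]
    simp [Nat.mul_mod_right]
  · rw [if_neg hk]
    have hk1 : 1 ≤ k.val := Nat.one_le_iff_ne_zero.mpr (fun h => hk (Fin.ext (by simp [h])))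
    congr 1
    omega

lemma rel2 (p : ℕ) [NeZero p] (hp : 1 < p) :
    Epl p * Dd p = (q p ^ 2) • (Dd p * Epl p) := by
  apply LinearMap.ext; intro f
  funext x
  obtain ⟨n, m, k⟩ := x
  simp only [Module.End.mul_apply, LinearMap.smul_apply, Pi.smul_apply, smul_eq_mul,
    Epl, Dd, LinearMap.coe_mk, AddHom.coe_mk]
  by_cases hn : n = 0
  · simp [hn]
  simp only [if_neg hn]
  rw [← mul_assoc, q_shift p hp k]

lemma rel3 (p : ℕ) [NeZero p] (hp : 1 < p) :
    Eml p * Dd p = (q p ^ 2) • (Dd p * Eml p) := by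
  apply LinearMap.ext; intro f
  funext x
  obtain ⟨n, m, k⟩ := x
  simp only [Module.End.mul_apply, LinearMap.smul_apply, Pi.smul_apply, smul_eq_mul,
    Eml, Dd, LinearMap.coe_mk, AddHom.coe_mk]
  by_cases hm : m = 0
  · simp [hm]
  simp only [if_neg hm]
  conv_rhs => rw [pow_add, ← mul_assoc, ← mul_assoc, q_shift p hp k, ← pow_add]

lemma Dd_pow_apply (p : ℕ) [NeZero p] (j : ℕ) (f : Vr p) (x : Fin p × Fin p × Fin p) :
    ((Dd p) ^ j) f x = f (x.1, x.2.1, x.2.2 - (j : Fin p)) := by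
  induction j generalizing f x with
  | zero => simp
  | succ j ih =>
      rw [pow_succ, Module.End.mul_apply, ih]
      show f _ = f _
      congr 1
      refine Prod.ext rfl (Prod.ext rfl ?_)
      show x.2.2 - (j : Fin p) - 1 = x.2.2 - ((j : ℕ) + 1 : ℕ)
      push_cast
      ring

lemma rel4 (p : ℕ) [NeZero p] : (Dd p) ^ p = (1 : Module.End ℂ (Vr p)) := by
  apply LinearMap.ext; intro f
  funext x
  rw [Dd_pow_apply]
  simp

lemma Epl_pow_apply_zero (p : ℕ) [NeZero p] (j : ℕ) (f : Vr p)
    (x : Fin p × Fin p × Fin p) (h : (x.1 : ℕ) < j) : ((Epl p) ^ j) f x = 0 := by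
  induction j generalizing x with
  | zero => omega
  | succ j ih =>
      rw [pow_succ', Module.End.mul_apply]
      show (if x.1 = 0 then 0 else q p ^ (2 * (x.2.2 : ℕ)) * ((Epl p) ^ j) f (x.1 - 1, x.2.1, x.2.2)) = 0
      by_cases hx : x.1 = 0
      · rw [if_pos hx]
      · rw [if_neg hx, ih]
        · ring
        · show ((x.1 - 1 : Fin p) : ℕ) < j
          have h0 : x.1.val ≠ 0 := fun hh => hx (Fin.ext (by simp [hh]))
          have h1 := x.1.isLt
          rw [fin_coe_sub_one (by omega) x.1, if_neg hx]
          omega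

lemma rel5 (p : ℕ) [NeZero p] : (Epl p) ^ p = (0 : Module.End ℂ (Vr p)) := by
  apply LinearMap.ext; intro f
  funext x
  rw [Epl_pow_apply_zero p p f x x.1.isLt]
  rfl

lemma Eml_pow_apply_zero (p : ℕ) [NeZero p] (j : ℕ) (f : Vr p)
    (x : Fin p × Fin p × Fin p) (h : (x.2.1 : ℕ) < j) : ((Eml p) ^ j) f x = 0 := by
  induction j generalizing x with
  | zero => omega
  | succ j ih =>
      rw [pow_succ', Module.End.mul_apply]
      show (if x.2.1 = 0 then 0 else q p ^ (2 * (x.2.2 : ℕ) + 2 * (x.1 : ℕ)) * ((Eml p) ^ j) f (x.1, x.2.1 - 1, x.2.2)) = 0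
      by_cases hx : x.2.1 = 0
      · rw [if_pos hx]
      · rw [if_neg hx, ih]
        · ring
        · show ((x.2.1 - 1 : Fin p) : ℕ) < j
          have h0 : x.2.1.val ≠ 0 := fun hh => hx (Fin.ext (by simp [hh]))
          have h1 := x.2.1.isLt
          rw [fin_coe_sub_one (by omega) x.2.1, if_neg hx]
          omega

lemma rel6 (p : ℕ) [NeZero p] : (Eml p) ^ p = (0 : Module.End ℂ (Vr p)) := by
  apply LinearMap.ext; intro f
  funext x
  rw [Eml_pow_apply_zero p p f x x.2.1.isLt]
  rfl

def gmap (p : ℕ) [NeZero p] : Gen → Module.End ℂ (Vr p)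
  | .ep => Epl p
  | .em => Eml p
  | .d => Dd p

def fEnd (p : ℕ) [NeZero p] : FreeAlgebra ℂ Gen →ₐ[ℂ] Module.End ℂ (Vr p) :=
  FreeAlgebra.lift ℂ (gmap p)

lemma fEnd_rel (p : ℕ) [NeZero p] (hp : 1 < p) :
    ∀ ⦃x y⦄, ERel p x y → fEnd p x = fEnd p y := by
  intro x y h
  cases h <;>
    simp only [fEnd, map_mul, map_smul, map_pow, map_one, map_zero,
      FreeAlgebra.lift_ι_apply, gmap]
  · exact rel1 p hp
  · exact rel2 p hp
  · exact rel3 p hp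
  · exact rel4 p
  · exact rel5 p
  · exact rel6 p

def φE (p : ℕ) [NeZero p] (hp : 1 < p) : A p →ₐ[ℂ] Module.End ℂ (Vr p) :=
  RingQuot.liftAlgHom ℂ ⟨fEnd p, fEnd_rel p hp⟩

lemma φE_ηp (p : ℕ) [NeZero p] (hp : 1 < p) : φE p hp (ηp p) = Epl p := by
  rw [ηp, φE, RingQuot.liftAlgHom_mkAlgHom_apply, fEnd, FreeAlgebra.lift_ι_apply]; rfl

lemma φE_ηm (p : ℕ) [NeZero p] (hp : 1 < p) : φE p hp (ηm p) = Eml p := by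
  rw [ηm, φE, RingQuot.liftAlgHom_mkAlgHom_apply, fEnd, FreeAlgebra.lift_ι_apply]; rfl

lemma φE_dl (p : ℕ) [NeZero p] (hp : 1 < p) : φE p hp (dl p) = Dd p := by
  rw [dl, φE, RingQuot.liftAlgHom_mkAlgHom_apply, fEnd, FreeAlgebra.lift_ι_apply]; rfl

lemma fin_succ_val {p : ℕ} [NeZero p] {j : Fin p} (h : (j : ℕ) + 1 < p) :
    ((j + 1 : Fin p) : ℕ) = (j : ℕ) + 1 := by
  have hp : 1 < p := by omega
  rw [Fin.add_def]
  show ((j : ℕ) + ((1 : Fin p) : ℕ)) % p = (j : ℕ) + 1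
  rw [Fin.val_one' p, Nat.mod_eq_of_lt hp, Nat.mod_eq_of_lt h]

lemma appDd (p : ℕ) [NeZero p] (n m j : Fin p) :
    Dd p ((Pi.single (n, m, j) (1 : ℂ) : Vr p)) = (Pi.single (n, m, j + 1) (1 : ℂ) : Vr p) := by
  funext x
  obtain ⟨a, b, c⟩ := x
  show (Pi.single (n, m, j) (1 : ℂ) : Vr p) (a, b, c - 1) = (Pi.single (n, m, j + 1) (1 : ℂ) : Vr p) (a, b, c)
  rw [Pi.single_apply, Pi.single_apply]
  refine if_congr ?_ rfl rfl
  simp only [Prod.mk.injEq]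
  constructor
  · rintro ⟨rfl, rfl, hc⟩
    exact ⟨rfl, rfl, by rw [← hc]; ring⟩
  · rintro ⟨rfl, rfl, hc⟩
    exact ⟨rfl, rfl, by rw [hc]; ring⟩

lemma appEp (p : ℕ) [NeZero p] (j m k : Fin p) (h : (j : ℕ) + 1 < p) :
    Epl p (Pi.single (j, m, k) (1 : ℂ) : Vr p) =
      q p ^ (2 * (k : ℕ)) • (Pi.single (j + 1, m, k) (1 : ℂ) : Vr p) := by
  funext x
  obtain ⟨a, b, c⟩ := x
  show (if a = 0 then 0 else q p ^ (2 * (c : ℕ)) * (Pi.single (j, m, k) (1:ℂ) : Vr p) (a - 1, b, c))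
      = q p ^ (2 * (k : ℕ)) * (Pi.single (j + 1, m, k) (1:ℂ) : Vr p) (a, b, c)
  have hj1 : (j + 1 : Fin p) ≠ 0 := by
    intro hh
    have := fin_succ_val (p := p) h
    rw [hh] at this
    simp at this
  by_cases hcond : (a, b, c) = ((j + 1 : Fin p), m, k)
  · obtain ⟨rfl, rfl, rfl⟩ : a = j + 1 ∧ b = m ∧ c = k := by
      simpa [Prod.ext_iff] using hcond
    rw [if_neg hj1, Pi.single_apply, if_pos (by simp [Prod.ext_iff]), Pi.single_apply,
      if_pos rfl]
  · conv_rhs => rw [Pi.single_apply, if_neg hcond]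
    rw [mul_zero]
    by_cases ha : a = 0
    · rw [if_pos ha]
    · rw [if_neg ha, Pi.single_apply, if_neg, mul_zero]
      intro hh
      apply hcond
      simp only [Prod.mk.injEq] at hh ⊢
      exact ⟨by rw [← hh.1]; ring, hh.2.1, hh.2.2⟩

lemma appEm (p : ℕ) [NeZero p] (n j k : Fin p) (h : (j : ℕ) + 1 < p) :
    Eml p (Pi.single (n, j, k) (1 : ℂ) : Vr p) =
      q p ^ (2 * (k : ℕ) + 2 * (n : ℕ)) • (Pi.single (n, j + 1, k) (1 : ℂ) : Vr p) := by
  funext x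
  obtain ⟨a, b, c⟩ := x
  show (if b = 0 then 0 else q p ^ (2 * (c : ℕ) + 2 * (a : ℕ)) * (Pi.single (n, j, k) (1:ℂ) : Vr p) (a, b - 1, c))
      = q p ^ (2 * (k : ℕ) + 2 * (n : ℕ)) * (Pi.single (n, j + 1, k) (1:ℂ) : Vr p) (a, b, c)
  have hj1 : (j + 1 : Fin p) ≠ 0 := by
    intro hh
    have := fin_succ_val (p := p) h
    rw [hh] at this
    simp at this
  by_cases hcond : (a, b, c) = (n, (j + 1 : Fin p), k)
  · obtain ⟨rfl, rfl, rfl⟩ : a = n ∧ b = j + 1 ∧ c = k := by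
      simpa [Prod.ext_iff] using hcond
    rw [if_neg hj1, Pi.single_apply, if_pos (by simp [Prod.ext_iff]), Pi.single_apply,
      if_pos rfl]
  · conv_rhs => rw [Pi.single_apply, if_neg hcond]
    rw [mul_zero]
    by_cases hb : b = 0
    · rw [if_pos hb]
    · rw [if_neg hb, Pi.single_apply, if_neg, mul_zero]
      intro hh
      apply hcond
      simp only [Prod.mk.injEq] at hh ⊢
      exact ⟨hh.1, by rw [← hh.2.1]; ring, hh.2.2⟩

lemma Dd_iter (p : ℕ) [NeZero p] (k : Fin p) :
    ((Dd p) ^ (k : ℕ)) (Pi.single ((0 : Fin p), (0 : Fin p), (0 : Fin p)) (1 : ℂ) : Vr p)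
      = (Pi.single ((0 : Fin p), (0 : Fin p), k) (1 : ℂ) : Vr p) := by
  funext x
  obtain ⟨a, b, c⟩ := x
  rw [Dd_pow_apply]
  show (Pi.single ((0:Fin p), (0:Fin p), (0:Fin p)) (1:ℂ) : Vr p) (a, b, c - ((k : ℕ) : Fin p))
      = (Pi.single ((0:Fin p), (0:Fin p), k) (1:ℂ) : Vr p) (a, b, c)
  rw [Fin.cast_val_eq_self, Pi.single_apply, Pi.single_apply]
  refine if_congr ?_ rfl rfl
  simp only [Prod.mk.injEq]
  constructor
  · rintro ⟨rfl, rfl, hc⟩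
    exact ⟨rfl, rfl, sub_eq_zero.mp hc⟩
  · rintro ⟨rfl, rfl, rfl⟩
    exact ⟨rfl, rfl, by ring⟩

lemma Em_iter (p : ℕ) [NeZero p] (k : Fin p) :
    ∀ m : ℕ, m < p →
      ((Eml p) ^ m) (Pi.single ((0 : Fin p), (0 : Fin p), k) (1 : ℂ) : Vr p)
        = q p ^ (2 * (k : ℕ) * m) • (Pi.single ((0 : Fin p), ((m : ℕ) : Fin p), k) (1 : ℂ) : Vr p) := by
  intro m
  induction m with
  | zero => intro _; simp
  | succ m ih =>
      intro hm
      rw [pow_succ', Module.End.mul_apply, ih (by omega), map_smul]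
      have hmv : (((m : ℕ) : Fin p) : ℕ) = m := Fin.val_cast_of_lt (by omega)
      rw [appEm p _ _ _ (by rw [hmv]; omega)]
      have hidx : ((m : ℕ) : Fin p) + 1 = (((m + 1 : ℕ)) : Fin p) := by push_cast; ring
      rw [smul_smul, ← pow_add, hidx]
      congr 1

lemma Ep_iter (p : ℕ) [NeZero p] (M k : Fin p) :
    ∀ n : ℕ, n < p →
      ((Epl p) ^ n) (Pi.single ((0 : Fin p), M, k) (1 : ℂ) : Vr p)
        = q p ^ (2 * (k : ℕ) * n) • (Pi.single (((n : ℕ) : Fin p), M, k) (1 : ℂ) : Vr p) := by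
  intro n
  induction n with
  | zero => intro _; simp
  | succ n ih =>
      intro hn
      rw [pow_succ', Module.End.mul_apply, ih (by omega), map_smul]
      have hnv : (((n : ℕ) : Fin p) : ℕ) = n := Fin.val_cast_of_lt (by omega)
      rw [appEp p _ _ _ (by rw [hnv]; omega)]
      have hidx : ((n : ℕ) : Fin p) + 1 = (((n + 1 : ℕ)) : Fin p) := by push_cast; ring
      rw [smul_smul, ← pow_add, hidx]
      congr 1

lemma key_formula (p : ℕ) [NeZero p] (hp : 1 < p) (x : Fin p × Fin p × Fin p) :
    (φE p hp (ηp p ^ (x.1 : ℕ) * ηm p ^ (x.2.1 : ℕ) * dl p ^ (x.2.2 : ℕ)))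
        (Pi.single ((0 : Fin p), (0 : Fin p), (0 : Fin p)) (1 : ℂ) : Vr p)
      = q p ^ (2 * (x.2.2 : ℕ) * ((x.2.1 : ℕ) + (x.1 : ℕ))) • (Pi.single x (1 : ℂ) : Vr p) := by
  obtain ⟨n, m, k⟩ := x
  rw [map_mul, map_mul, map_pow, map_pow, map_pow, φE_ηp, φE_ηm, φE_dl,
    Module.End.mul_apply, Module.End.mul_apply, Dd_iter, Em_iter p k _ m.isLt, map_smul,
    Ep_iter p _ k _ n.isLt, smul_smul, ← pow_add, Fin.cast_val_eq_self, Fin.cast_val_eq_self]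
  congr 2
  ring

lemma hEta (p : ℕ) : ηm p * ηp p = (q p ^ 2) • (ηp p * ηm p) := by
  have h := RingQuot.mkAlgHom_rel ℂ (ERel.commEta (p := p))
  rw [map_mul, map_smul, map_mul] at h
  exact h

lemma hEpD (p : ℕ) : ηp p * dl p = (q p ^ 2) • (dl p * ηp p) := by
  have h := RingQuot.mkAlgHom_rel ℂ (ERel.commEpD (p := p))
  rw [map_mul, map_smul, map_mul] at h
  exact h

lemma hEmD (p : ℕ) : ηm p * dl p = (q p ^ 2) • (dl p * ηm p) := by
  have h := RingQuot.mkAlgHom_rel ℂ (ERel.commEmD (p := p))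
  rw [map_mul, map_smul, map_mul] at h
  exact h

lemma hDp (p : ℕ) : dl p ^ p = 1 := by
  have h := RingQuot.mkAlgHom_rel ℂ (ERel.deltaPow (p := p))
  rw [map_pow, map_one] at h
  exact h

lemma hEpp (p : ℕ) : ηp p ^ p = 0 := by
  have h := RingQuot.mkAlgHom_rel ℂ (ERel.epPow (p := p))
  rw [map_pow, map_zero] at h
  exact h

lemma hEmp (p : ℕ) : ηm p ^ p = 0 := by
  have h := RingQuot.mkAlgHom_rel ℂ (ERel.emPow (p := p))
  rw [map_pow, map_zero] at h
  exact h

lemma hDEp (p : ℕ) : dl p * ηp p = ((q p ^ 2)⁻¹ : ℂ) • (ηp p * dl p) := by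
  have h := congrArg (fun z => ((q p ^ 2)⁻¹ : ℂ) • z) (hEpD p)
  simp only [smul_smul, inv_mul_cancel₀ (pow_ne_zero 2 (q_ne_zero p)), one_smul] at h
  exact h.symm

lemma hDEm (p : ℕ) : dl p * ηm p = ((q p ^ 2)⁻¹ : ℂ) • (ηm p * dl p) := by
  have h := congrArg (fun z => ((q p ^ 2)⁻¹ : ℂ) • z) (hEmD p)
  simp only [smul_smul, inv_mul_cancel₀ (pow_ne_zero 2 (q_ne_zero p)), one_smul] at h
  exact h.symm

lemma swap_single {R : Type*} [Ring R] [Algebra ℂ R] {a b : R} {c : ℂ}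
    (h : b * a = c • (a * b)) (n : ℕ) : b * a ^ n = c ^ n • (a ^ n * b) := by
  induction n with
  | zero => simp
  | succ n ih =>
      rw [pow_succ', ← mul_assoc, h, smul_mul_assoc, mul_assoc, ih, mul_smul_comm,
        smul_smul, ← mul_assoc, ← pow_succ', ← pow_succ']

lemma swap_pow {R : Type*} [Ring R] [Algebra ℂ R] {a b : R} {c : ℂ}
    (h : b * a = c • (a * b)) (n k : ℕ) : b ^ k * a ^ n = c ^ (n * k) • (a ^ n * b ^ k) := by
  induction k with
  | zero => simp
  | succ k ih =>
      rw [pow_succ, mul_assoc, swap_single h, mul_smul_comm, ← mul_assoc, ih,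
        smul_mul_assoc, smul_smul, mul_assoc, ← pow_succ, ← pow_add]
      congr 1
      ring

lemma shuffle {R : Type*} [Ring R] [Algebra ℂ R] (X Y Z U V W : R) {c1 c2 c3 : ℂ}
    (hZU : Z * U = c1 • (U * Z)) (hYU : Y * U = c2 • (U * Y)) (hZV : Z * V = c3 • (V * Z)) :
    (X * Y * Z) * (U * V * W) = (c1 * c2 * c3) • ((X * U) * (Y * V) * (Z * W)) := by
  calc (X * Y * Z) * (U * V * W)
      = X * (Y * ((Z * U) * (V * W))) := by simp only [mul_assoc]
    _ = X * (Y * ((c1 • (U * Z)) * (V * W))) := by rw [hZU]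
    _ = c1 • (X * (Y * (U * ((Z * V) * W)))) := by
        simp only [smul_mul_assoc, mul_smul_comm, mul_assoc]
    _ = c1 • (X * (Y * (U * ((c3 • (V * Z)) * W)))) := by rw [hZV]
    _ = c1 • (c3 • (X * ((Y * U) * (V * (Z * W))))) := by
        simp only [smul_mul_assoc, mul_smul_comm, mul_assoc]
    _ = c1 • (c3 • (X * ((c2 • (U * Y)) * (V * (Z * W))))) := by rw [hYU]
    _ = (c1 * c2 * c3) • ((X * U) * (Y * V) * (Z * W)) := by
        simp only [smul_mul_assoc, mul_smul_comm, mul_assoc, smul_smul]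
        congr 1
        ring

lemma mon_mul (p : ℕ) (n1 m1 k1 n2 m2 k2 : ℕ) :
    ∃ c : ℂ, (ηp p ^ n1 * ηm p ^ m1 * dl p ^ k1) * (ηp p ^ n2 * ηm p ^ m2 * dl p ^ k2)
      = c • (ηp p ^ (n1 + n2) * ηm p ^ (m1 + m2) * dl p ^ (k1 + k2)) := by
  refine ⟨((q p ^ 2)⁻¹ : ℂ) ^ (n2 * k1) * (q p ^ 2) ^ (n2 * m1) * ((q p ^ 2)⁻¹ : ℂ) ^ (m2 * k1), ?_⟩
  rw [shuffle (ηp p ^ n1) (ηm p ^ m1) (dl p ^ k1) (ηp p ^ n2) (ηm p ^ m2) (dl p ^ k2)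
    (swap_pow (hDEp p) n2 k1) (swap_pow (hEta p) n2 m1) (swap_pow (hDEm p) m2 k1),
    ← pow_add, ← pow_add, ← pow_add]

lemma mon_mem_span (p : ℕ) [NeZero p] (n m k : ℕ) :
    ηp p ^ n * ηm p ^ m * dl p ^ k ∈ Submodule.span ℂ
      (Set.range (fun x : Fin p × Fin p × Fin p =>
        ηp p ^ (x.1 : ℕ) * ηm p ^ (x.2.1 : ℕ) * dl p ^ (x.2.2 : ℕ))) := by
  have hppos : 0 < p := Nat.pos_of_ne_zero (NeZero.ne p)
  by_cases hn : n < p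
  · by_cases hm : m < p
    · have hk : dl p ^ k = dl p ^ (k % p) := by
        conv_lhs => rw [← Nat.div_add_mod k p]
        rw [pow_add, pow_mul, hDp, one_pow, one_mul]
      rw [hk]
      exact Submodule.subset_span ⟨(⟨n, hn⟩, ⟨m, hm⟩, ⟨k % p, Nat.mod_lt k hppos⟩), rfl⟩
    · have : ηm p ^ m = 0 := by
        rw [show m = p + (m - p) by omega, pow_add, hEmp, zero_mul]
      rw [this, mul_zero, zero_mul]
      exact Submodule.zero_mem _
  · have : ηp p ^ n = 0 := by
      rw [show n = p + (n - p) by omega, pow_add, hEpp, zero_mul]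
    rw [this, zero_mul, zero_mul]
    exact Submodule.zero_mem _

lemma span_closed_mul (p : ℕ) [NeZero p] {a b : A p}
    (ha : a ∈ Submodule.span ℂ (Set.range (fun x : Fin p × Fin p × Fin p =>
      ηp p ^ (x.1 : ℕ) * ηm p ^ (x.2.1 : ℕ) * dl p ^ (x.2.2 : ℕ))))
    (hb : b ∈ Submodule.span ℂ (Set.range (fun x : Fin p × Fin p × Fin p =>
      ηp p ^ (x.1 : ℕ) * ηm p ^ (x.2.1 : ℕ) * dl p ^ (x.2.2 : ℕ)))) :
    a * b ∈ Submodule.span ℂ (Set.range (fun x : Fin p × Fin p × Fin p =>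
      ηp p ^ (x.1 : ℕ) * ηm p ^ (x.2.1 : ℕ) * dl p ^ (x.2.2 : ℕ))) := by
  set S := Submodule.span ℂ (Set.range (fun x : Fin p × Fin p × Fin p =>
      ηp p ^ (x.1 : ℕ) * ηm p ^ (x.2.1 : ℕ) * dl p ^ (x.2.2 : ℕ))) with hS
  induction ha using Submodule.span_induction generalizing b with
  | mem u hu =>
      induction hb using Submodule.span_induction with
      | mem v hv =>
          obtain ⟨x, rfl⟩ := hu
          obtain ⟨y, rfl⟩ := hv
          obtain ⟨c, hc⟩ := mon_mul p (x.1 : ℕ) (x.2.1 : ℕ) (x.2.2 : ℕ) (y.1 : ℕ) (y.2.1 : ℕ) (y.2.2 : ℕ)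
          rw [hc]
          exact Submodule.smul_mem _ _ (mon_mem_span p _ _ _)
      | zero => rw [mul_zero]; exact Submodule.zero_mem _
      | add v w _ _ hv hw => rw [mul_add]; exact Submodule.add_mem _ hv hw
      | smul c v _ hv => rw [mul_smul_comm]; exact Submodule.smul_mem _ _ hv
  | zero => rw [zero_mul]; exact Submodule.zero_mem _
  | add u v _ _ hu hv => rw [add_mul]; exact Submodule.add_mem _ (hu hb) (hv hb)
  | smul c u _ hu => rw [smul_mul_assoc]; exact Submodule.smul_mem _ _ (hu hb)

lemma span_top (p : ℕ) [NeZero p] :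
    Submodule.span ℂ (Set.range (fun x : Fin p × Fin p × Fin p =>
      ηp p ^ (x.1 : ℕ) * ηm p ^ (x.2.1 : ℕ) * dl p ^ (x.2.2 : ℕ))) = ⊤ := by
  set S := Submodule.span ℂ (Set.range (fun x : Fin p × Fin p × Fin p =>
      ηp p ^ (x.1 : ℕ) * ηm p ^ (x.2.1 : ℕ) * dl p ^ (x.2.2 : ℕ))) with hS
  rw [Submodule.eq_top_iff']
  intro a
  obtain ⟨y, rfl⟩ := RingQuot.mkAlgHom_surjective ℂ (ERel p) a
  induction y using FreeAlgebra.induction with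
  | grade0 r =>
      rw [AlgHom.commutes]
      have h1 : (1 : A p) ∈ S := by
        have := mon_mem_span p 0 0 0
        simpa using this
      simpa [Algebra.algebraMap_eq_smul_one] using Submodule.smul_mem S r h1
  | grade1 g =>
      cases g
      · have := mon_mem_span p 1 0 0
        simp only [pow_one, pow_zero, mul_one, one_mul] at this
        exact this
      · have := mon_mem_span p 0 1 0
        simp only [pow_one, pow_zero, mul_one, one_mul] at this
        exact this
      · have := mon_mem_span p 0 0 1
        simp only [pow_one, pow_zero, mul_one, one_mul] at this
        exact this
  | mul u v hu hv =>
      rw [map_mul]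
      exact span_closed_mul p hu hv
  | add u v hu hv =>
      rw [map_add]
      exact Submodule.add_mem _ hu hv


theorem statement1 (p : ℕ) (hp : Odd p) (hp3 : 3 ≤ p) :
    LinearIndependent ℂ
      (fun x : Fin p × Fin p × Fin p =>
        ηp p ^ (x.1 : ℕ) * ηm p ^ (x.2.1 : ℕ) * dl p ^ (x.2.2 : ℕ)) ∧
    Submodule.span ℂ
      (Set.range (fun x : Fin p × Fin p × Fin p =>
        ηp p ^ (x.1 : ℕ) * ηm p ^ (x.2.1 : ℕ) * dl p ^ (x.2.2 : ℕ))) = ⊤ ∧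
    Module.finrank ℂ (A p) = p ^ 3 := by
  have : NeZero p := ⟨by omega⟩
  have hp1 : 1 < p := by omega
  set mon := (fun x : Fin p × Fin p × Fin p =>
    ηp p ^ (x.1 : ℕ) * ηm p ^ (x.2.1 : ℕ) * dl p ^ (x.2.2 : ℕ)) with hmon
  let L : A p →ₗ[ℂ] Vr p :=
    (LinearMap.applyₗ (Pi.single ((0 : Fin p), (0 : Fin p), (0 : Fin p)) (1 : ℂ) : Vr p)).comp
      (φE p hp1).toLinearMap
  have hLI : LinearIndependent ℂ mon := by
    apply LinearIndependent.of_comp L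
    have heq : (L ∘ mon) =
        (fun x : Fin p × Fin p × Fin p =>
          (Units.mk0 (q p ^ (2 * (x.2.2 : ℕ) * ((x.2.1 : ℕ) + (x.1 : ℕ))))
            (pow_ne_zero _ (q_ne_zero p)) : ℂˣ)) •
        (fun x : Fin p × Fin p × Fin p => ((Pi.basisFun ℂ (Fin p × Fin p × Fin p)) x : Vr p)) := by
      funext x
      simp only [Function.comp_apply, Pi.smul_apply', hmon, L, LinearMap.coe_comp,
        LinearMap.applyₗ_apply_apply, AlgHom.toLinearMap_apply, Pi.basisFun_apply]
      rw [key_formula p hp1 x]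
      simp [Units.smul_def]
    rw [heq]
    exact ((Pi.basisFun ℂ (Fin p × Fin p × Fin p)).linearIndependent).units_smul _
  refine ⟨hLI, span_top p, ?_⟩
  let b : Module.Basis (Fin p × Fin p × Fin p) ℂ (A p) := Module.Basis.mk hLI (by rw [span_top p])
  rw [Module.finrank_eq_card_basis b]
  simp only [Fintype.card_prod, Fintype.card_fin]
  ring
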